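/- The Fourier transform F on H ⊗ H satisfies: (1) F((f ⊗ g)·Δ(h)) = F(f ⊗ g)·(1 ⊗ h); (2) F(hf ⊗ g) = (h ⊗ 1)·F(f ⊗ g); (3) F(f ⊗ hg) = (1 ⊗ h₍₂₎)·F(f ⊗ g)·(S(h₍₁₎) ⊗ 1), for all f, g, h ∈ H. -/

import Mathlib

/-!
STATEMENT 2: Properties of the Fourier transform `F(f ⊗ g) = f·S(g₍₁₎) ⊗ g₍₂₎`:
(1) `F((f ⊗ g)·Δ(h)) = F(f ⊗ g)·(1 ⊗ h)`;
(2) `F(hf ⊗ g) = (h ⊗ 1)·F(f ⊗ g)`;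
(3) `F(f ⊗ hg) = (1 ⊗ h₍₂₎)·F(f ⊗ g)·(S(h₍₁₎) ⊗ 1)`.
-/

open TensorProduct

noncomputable section

open Coalgebra

set_option maxHeartbeats 1000000
set_option synthInstance.maxHeartbeats 400000


lemma sum4_comm {ι κ : Type*} {ι' : ι → Type*} {κ' : κ → Type*} {G : Type*} [AddCommMonoid G]
    (s : Finset ι) (s' : ∀ i, Finset (ι' i)) (u : Finset κ) (u' : ∀ j, Finset (κ' j))
    (f : (i : ι) → ι' i → (j : κ) → κ' j → G) :
    ∑ i ∈ s, ∑ m ∈ s' i, ∑ j ∈ u, ∑ n ∈ u' j, f i m j n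
      = ∑ j ∈ u, ∑ n ∈ u' j, ∑ i ∈ s, ∑ m ∈ s' i, f i m j n := by
  calc ∑ i ∈ s, ∑ m ∈ s' i, ∑ j ∈ u, ∑ n ∈ u' j, f i m j n
      = ∑ p ∈ s.sigma s', ∑ q ∈ u.sigma u', f p.1 p.2 q.1 q.2 := by
        rw [Finset.sum_sigma' s s' (fun i m => ∑ j ∈ u, ∑ n ∈ u' j, f i m j n)]
        exact Finset.sum_congr rfl fun p _ => Finset.sum_sigma' u u' _
    _ = ∑ q ∈ u.sigma u', ∑ p ∈ s.sigma s', f p.1 p.2 q.1 q.2 := Finset.sum_comm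
    _ = ∑ j ∈ u, ∑ n ∈ u' j, ∑ i ∈ s, ∑ m ∈ s' i, f i m j n := by
        rw [Finset.sum_sigma' u u' (fun j n => ∑ i ∈ s, ∑ m ∈ s' i, f i m j n)]
        exact Finset.sum_congr rfl fun q _ => (Finset.sum_sigma' s s' (fun i m => f i m q.1 q.2)).symm


variable (k H : Type*) [Field k] [Ring H] [HopfAlgebra k H]

/-- The Fourier transform `F(f ⊗ g) = f·S(g₍₁₎) ⊗ g₍₂₎`. -/
def fourierF : H ⊗[k] H →ₗ[k] H ⊗[k] H :=
  (LinearMap.rTensor H (LinearMap.mul' k H))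
    ∘ₗ (TensorProduct.assoc k H H H).symm.toLinearMap
    ∘ₗ (LinearMap.lTensor H
        ((LinearMap.rTensor H (HopfAlgebra.antipode (R := k))) ∘ₗ
          (Coalgebra.comul : H →ₗ[k] H ⊗[k] H)))

/-- For a fixed `a ∈ H ⊗ H`, the linear map `H ⊗ H → H ⊗ H` sending
`x ⊗ y ↦ (1 ⊗ y) · a · (S(x) ⊗ 1)`.  Applied to `Δ(h)` it produces
`(1 ⊗ h₍₂₎) · a · (S(h₍₁₎) ⊗ 1)` (Sweedler notation). -/
def sandwich (a : H ⊗[k] H) : H ⊗[k] H →ₗ[k] H ⊗[k] H :=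
  TensorProduct.lift (LinearMap.mk₂ k
    (fun x y => ((1 : H) ⊗ₜ[k] y) * a * ((HopfAlgebra.antipode (R := k) x) ⊗ₜ[k] (1 : H)))
    (fun x₁ x₂ y => by simp [map_add, TensorProduct.add_tmul, mul_add])
    (fun c x y => by simp [map_smul, ← TensorProduct.smul_tmul', mul_smul_comm])
    (fun x y₁ y₂ => by simp [TensorProduct.tmul_add, add_mul, mul_add])
    (fun c x y => by simp [TensorProduct.tmul_smul, smul_mul_assoc]))

variable {k H}

local notation "S" => HopfAlgebra.antipode (R := k) (A := H)

lemma counit_smul_right {ι : Type*} {a : H} (r : Repr k a ι) :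
    ∑ i ∈ r.index, counit (R := k) (r.right i) • r.left i = a := by
  have h1 : ∑ i ∈ r.index, counit (R := k) (r.right i) • r.left i
      = TensorProduct.rid k H (∑ i ∈ r.index, r.left i ⊗ₜ[k] counit (R := k) (r.right i)) := by
    rw [map_sum]; simp
  rw [h1, sum_tmul_counit_eq r]; simp

lemma counit_smul_left {ι : Type*} {a : H} (r : Repr k a ι) :
    ∑ i ∈ r.index, counit (R := k) (r.left i) • r.right i = a := by
  have h1 : ∑ i ∈ r.index, counit (R := k) (r.left i) • r.right i
      = TensorProduct.lid k H (∑ i ∈ r.index, counit (R := k) (r.left i) ⊗ₜ[k] r.right i) := by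
    rw [map_sum]; simp
  rw [h1, sum_counit_tmul_eq r]; simp

lemma sum_counit_right_smul_apply {M : Type*} [AddCommMonoid M] [Module k M]
    (φ : H →ₗ[k] M) {ι : Type*} {b : H} (r : Repr k b ι) :
    ∑ j ∈ r.index, counit (R := k) (r.right j) • φ (r.left j) = φ b := by
  calc ∑ j ∈ r.index, counit (R := k) (r.right j) • φ (r.left j)
      = φ (∑ j ∈ r.index, counit (R := k) (r.right j) • r.left j) := by
        rw [map_sum]; exact Finset.sum_congr rfl fun j _ => (map_smul φ _ _).symm
    _ = φ b := by rw [counit_smul_right r]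

lemma sum_counit_left_smul_apply {M : Type*} [AddCommMonoid M] [Module k M]
    (φ : H →ₗ[k] M) {ι : Type*} {b : H} (r : Repr k b ι) :
    ∑ j ∈ r.index, counit (R := k) (r.left j) • φ (r.right j) = φ b := by
  calc ∑ j ∈ r.index, counit (R := k) (r.left j) • φ (r.right j)
      = φ (∑ j ∈ r.index, counit (R := k) (r.left j) • r.right j) := by
        rw [map_sum]; exact Finset.sum_congr rfl fun j _ => (map_smul φ _ _).symm
    _ = φ b := by rw [counit_smul_left r]

def Reprmul {ι κ : Type*} {a b : H} (ra : Repr k a ι) (rb : Repr k b κ) : Repr k (a * b) (ι × κ) where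
  index := ra.index ×ˢ rb.index
  left := fun p => ra.left p.1 * rb.left p.2
  right := fun p => ra.right p.1 * rb.right p.2
  eq := by
    rw [show (CoalgebraStruct.comul (R := k) (a * b) : H ⊗[k] H) = comul a * comul b from
      Bialgebra.comul_mul a b, ← ra.eq, ← rb.eq, Finset.sum_mul_sum, Finset.sum_product]
    simp [Algebra.TensorProduct.tmul_mul_tmul]

/-- `p ⊗ (q ⊗ r) ↦ S p * (c * (q * (d * r)))` -/
def quadMul (c d : H) : H ⊗[k] (H ⊗[k] H) →ₗ[k] H :=
  (LinearMap.mul' k H) ∘ₗ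
    (LinearMap.lTensor H ((LinearMap.mulLeft k c) ∘ₗ (LinearMap.mul' k H) ∘ₗ
      (LinearMap.lTensor H (LinearMap.mulLeft k d)))) ∘ₗ
    (LinearMap.rTensor (H ⊗[k] H) S)

@[simp] lemma quadMul_apply (c d p q r : H) :
    quadMul c d (p ⊗ₜ[k] (q ⊗ₜ[k] r)) = S p * (c * (q * (d * r))) := by
  simp [quadMul]

set_option maxHeartbeats 1000000 in
lemma antipode_mul_aux (a b : H) (ra : Repr k a (H × H)) (rb : Repr k b (H × H))
    (rla : ∀ i, Repr k (ra.left i) (H × H)) (rra : ∀ i, Repr k (ra.right i) (H × H))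
    (rlb : ∀ j, Repr k (rb.left j) (H × H)) (rrb : ∀ j, Repr k (rb.right j) (H × H)) :
    S (a * b) = S b * S a := by
  set X : H := ∑ j ∈ rb.index, ∑ n ∈ (rrb j).index, ∑ i ∈ ra.index, ∑ m ∈ (rra i).index,
    S (ra.left i * rb.left j) *
      (1 * ((rra i).left m * (((rrb j).left n * S ((rrb j).right n)) * S ((rra i).right m))))
    with hX
  -- Chain A : X = S (a * b)
  have h1 : X = ∑ i ∈ ra.index, ∑ m ∈ (rra i).index, ∑ j ∈ rb.index,
      counit (R := k) (rb.right j) •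
        (S (ra.left i * rb.left j) * ((rra i).left m * S ((rra i).right m))) := by
    rw [hX, ← sum4_comm]
    refine Finset.sum_congr rfl fun i _ => Finset.sum_congr rfl fun m _ =>
      Finset.sum_congr rfl fun j _ => ?_
    rw [show (∑ n ∈ (rrb j).index,
        S (ra.left i * rb.left j) *
          (1 * ((rra i).left m * (((rrb j).left n * S ((rrb j).right n)) * S ((rra i).right m)))))
        = S (ra.left i * rb.left j) *
          (1 * ((rra i).left m *
            ((∑ n ∈ (rrb j).index, (rrb j).left n * S ((rrb j).right n)) * S ((rra i).right m))))
      from by simp only [← Finset.mul_sum, ← Finset.sum_mul],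
      HopfAlgebra.sum_mul_antipode_eq_smul (rrb j)]
    simp [mul_smul_comm, smul_mul_assoc, mul_assoc]
  have h2 : X = ∑ i ∈ ra.index, ∑ m ∈ (rra i).index,
      S (ra.left i * b) * ((rra i).left m * S ((rra i).right m)) := by
    rw [h1]
    refine Finset.sum_congr rfl fun i _ => Finset.sum_congr rfl fun m _ => ?_
    have := sum_counit_right_smul_apply
      ((LinearMap.mulRight k ((rra i).left m * S ((rra i).right m))) ∘ₗ S ∘ₗ
        (LinearMap.mulLeft k (ra.left i))) rb
    simpa [mul_assoc] using this
  have h3 : X = ∑ i ∈ ra.index, counit (R := k) (ra.right i) • S (ra.left i * b) := by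
    rw [h2]
    refine Finset.sum_congr rfl fun i _ => ?_
    rw [← Finset.mul_sum, HopfAlgebra.sum_mul_antipode_eq_smul (rra i)]
    simp [mul_smul_comm]
  have hA : X = S (a * b) := by
    rw [h3]
    simpa using sum_counit_right_smul_apply (S ∘ₗ LinearMap.mulRight k b) ra
  -- Chain B : X = S b * S a
  have g1 : X = ∑ j ∈ rb.index, ∑ n ∈ (rrb j).index, ∑ i ∈ ra.index, ∑ m ∈ (rla i).index,
      S ((rla i).left m * rb.left j) *
        ((rla i).right m * (((rrb j).left n * S ((rrb j).right n)) * S (ra.right i))) := by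
    rw [hX]
    refine Finset.sum_congr rfl fun j _ => Finset.sum_congr rfl fun n _ => ?_
    have hT := sum_tmul_tmul_eq ra rla rra
    have := congrArg (⇑((quadMul 1 ((rrb j).left n * S ((rrb j).right n))) ∘ₗ
        (TensorProduct.map (LinearMap.mulRight k (rb.left j)) (LinearMap.lTensor H S)))) hT
    simpa [map_sum, mul_assoc] using this.symm
  have g2 : X = ∑ i ∈ ra.index, ∑ m ∈ (rla i).index, ∑ j ∈ rb.index, ∑ n ∈ (rrb j).index,
      S ((rla i).left m * rb.left j) *
        ((rla i).right m * (((rrb j).left n * S ((rrb j).right n)) * S (ra.right i))) := by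
    rw [g1, ← sum4_comm]
  have g3 : X = ∑ i ∈ ra.index, ∑ m ∈ (rla i).index, ∑ j ∈ rb.index, ∑ n ∈ (rlb j).index,
      S ((rla i).left m * (rlb j).left n) *
        ((rla i).right m * ((rlb j).right n * (S (rb.right j) * S (ra.right i)))) := by
    rw [g2]
    refine Finset.sum_congr rfl fun i _ => Finset.sum_congr rfl fun m _ => ?_
    have hT := sum_tmul_tmul_eq rb rlb rrb
    have := congrArg (⇑((quadMul ((rla i).right m) 1) ∘ₗ
        (TensorProduct.map (LinearMap.mulLeft k ((rla i).left m))
          (LinearMap.lTensor H ((LinearMap.mulRight k (S (ra.right i))) ∘ₗ S))))) hT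
    simpa [map_sum, mul_assoc] using this.symm
  have g4 : X = ∑ i ∈ ra.index, ∑ j ∈ rb.index,
      (counit (R := k) (ra.left i) * counit (R := k) (rb.left j)) •
        (S (rb.right j) * S (ra.right i)) := by
    rw [g3]
    refine Finset.sum_congr rfl fun i _ => ?_
    rw [Finset.sum_comm]
    refine Finset.sum_congr rfl fun j _ => ?_
    have hfac : (∑ m ∈ (rla i).index, ∑ n ∈ (rlb j).index,
        S ((rla i).left m * (rlb j).left n) *
          ((rla i).right m * ((rlb j).right n * (S (rb.right j) * S (ra.right i)))))
        = (∑ m ∈ (rla i).index, ∑ n ∈ (rlb j).index,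
            S ((rla i).left m * (rlb j).left n) * ((rla i).right m * (rlb j).right n)) *
          (S (rb.right j) * S (ra.right i)) := by
      rw [Finset.sum_mul]
      refine Finset.sum_congr rfl fun m _ => ?_
      rw [Finset.sum_mul]
      exact Finset.sum_congr rfl fun n _ => by noncomm_ring
    rw [hfac]
    have hsum : (∑ m ∈ (rla i).index, ∑ n ∈ (rlb j).index,
        S ((rla i).left m * (rlb j).left n) * ((rla i).right m * (rlb j).right n))
        = counit (R := k) (ra.left i * rb.left j) • (1 : H) := by
      have := HopfAlgebra.sum_antipode_mul_eq_smul (Reprmul (rla i) (rlb j))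
      simpa [Reprmul, Finset.sum_product] using this
    rw [hsum, Bialgebra.counit_mul]
    simp [smul_mul_assoc]
  have hB : X = S b * S a := by
    rw [g4]
    have hstep : ∀ i ∈ ra.index, (∑ j ∈ rb.index,
        (counit (R := k) (ra.left i) * counit (R := k) (rb.left j)) •
          (S (rb.right j) * S (ra.right i)))
        = counit (R := k) (ra.left i) • (S b * S (ra.right i)) := by
      intro i _
      have : ∀ j, (counit (R := k) (ra.left i) * counit (R := k) (rb.left j)) •
            (S (rb.right j) * S (ra.right i))
          = counit (R := k) (ra.left i) •
              ((counit (R := k) (rb.left j) • S (rb.right j)) * S (ra.right i)) := by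
        intro j; rw [mul_smul, smul_mul_assoc]
      rw [Finset.sum_congr rfl fun j _ => this j, ← Finset.smul_sum, ← Finset.sum_mul,
        sum_counit_left_smul_apply S rb]
    rw [Finset.sum_congr rfl hstep]
    have : ∀ i, counit (R := k) (ra.left i) • (S b * S (ra.right i))
        = S b * (counit (R := k) (ra.left i) • S (ra.right i)) := by
      intro i; rw [mul_smul_comm]
    rw [Finset.sum_congr rfl fun i _ => this i, ← Finset.mul_sum,
      sum_counit_left_smul_apply S ra]
  rw [← hA, hB]

lemma antipode_mul (a b : H) : S (a * b) = S b * S a :=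
  antipode_mul_aux a b (ℛ k a) (ℛ k b) (fun _ => ℛ k _) (fun _ => ℛ k _)
    (fun _ => ℛ k _) (fun _ => ℛ k _)


@[simp] lemma sandwich_apply (a : H ⊗[k] H) (x y : H) :
    sandwich k H a (x ⊗ₜ[k] y) = ((1 : H) ⊗ₜ[k] y) * a * ((S x) ⊗ₜ[k] (1 : H)) := by
  simp [sandwich]

lemma fourierF_tmul {ι : Type*} (f g : H) (r : Repr k g ι) :
    fourierF k H (f ⊗ₜ[k] g) = ∑ i ∈ r.index, (f * S (r.left i)) ⊗ₜ[k] r.right i := by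
  have hc : (Coalgebra.comul (R := k) g : H ⊗[k] H) = ∑ i ∈ r.index, r.left i ⊗ₜ[k] r.right i :=
    r.eq.symm
  simp only [fourierF, LinearMap.comp_apply, LinearMap.lTensor_tmul, LinearEquiv.coe_coe, hc]
  simp [map_sum, TensorProduct.tmul_sum]

lemma fourierF_tmul_mul {ι κ : Type*} (f : H) {b c : H} (rb : Repr k b ι) (rc : Repr k c κ) :
    fourierF k H (f ⊗ₜ[k] (b * c)) = ∑ j ∈ rb.index, ∑ m ∈ rc.index,
      (f * S (rb.left j * rc.left m)) ⊗ₜ[k] (rb.right j * rc.right m) := by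
  rw [fourierF_tmul f (b * c) (Reprmul rb rc)]
  exact Finset.sum_product rb.index rc.index
    (fun p => (f * S (rb.left p.1 * rc.left p.2)) ⊗ₜ[k] (rb.right p.1 * rc.right p.2))

set_option maxHeartbeats 1000000 in
set_option synthInstance.maxHeartbeats 400000 in
lemma one_tmul_eq (h : H) (r : Repr k h (H × H)) (rl : ∀ i, Repr k (r.left i) (H × H))
    (rr : ∀ i, Repr k (r.right i) (H × H)) :
    ∑ i ∈ r.index, ∑ m ∈ (rr i).index,
      (r.left i * S ((rr i).left m)) ⊗ₜ[k] (rr i).right m = (1 : H) ⊗ₜ[k] h := by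
  have hT := sum_tmul_tmul_eq r rl rr
  set Φ : H ⊗[k] (H ⊗[k] H) →ₗ[k] H ⊗[k] H :=
    (LinearMap.rTensor H ((LinearMap.mul' k H) ∘ₗ (LinearMap.lTensor H S))) ∘ₗ
      (TensorProduct.assoc k H H H).symm.toLinearMap with hΦ
  have happ : ∀ x y z : H, Φ (x ⊗ₜ[k] (y ⊗ₜ[k] z)) = (x * S y) ⊗ₜ[k] z := by
    intro x y z; simp [hΦ]
  have h1 := congrArg (⇑Φ) hT
  simp only [map_sum, happ] at h1
  -- h1 : ∑ i ∑ m (lla * S rla) ⊗ r.right i = ∑ i ∑ m (l i * S (rr left)) ⊗ (rr right)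
  rw [← h1]
  have h2 : ∀ i ∈ r.index, (∑ m ∈ (rl i).index,
      ((rl i).left m * S ((rl i).right m)) ⊗ₜ[k] r.right i)
      = counit (R := k) (r.left i) • ((1 : H) ⊗ₜ[k] r.right i) := by
    intro i _
    rw [← TensorProduct.sum_tmul, HopfAlgebra.sum_mul_antipode_eq_smul (rl i),
      TensorProduct.smul_tmul']
  rw [Finset.sum_congr rfl h2]
  simpa using sum_counit_left_smul_apply (TensorProduct.mk k H H 1) r

variable (k H)

set_option maxHeartbeats 1000000 in
/-- The three covariance properties of the Fourier transform. -/
theorem fourier_properties :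
    (∀ f g h : H,
        fourierF k H ((f ⊗ₜ[k] g) * (Coalgebra.comul (R := k) h)) =
          fourierF k H (f ⊗ₜ[k] g) * ((1 : H) ⊗ₜ[k] h)) ∧
    (∀ f g h : H,
        fourierF k H ((h * f) ⊗ₜ[k] g) = (h ⊗ₜ[k] (1 : H)) * fourierF k H (f ⊗ₜ[k] g)) ∧
    (∀ f g h : H,
        fourierF k H (f ⊗ₜ[k] (h * g)) =
          sandwich k H (fourierF k H (f ⊗ₜ[k] g)) (Coalgebra.comul (R := k) h)) := by
  refine ⟨?_, ?_, ?_⟩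
  · -- property (1)
    intro f g h
    set rg := ℛ k g
    set rh := ℛ k h
    set rlh : ∀ i, Repr k (rh.left i) (H × H) := fun i => ℛ k _
    set rrh : ∀ i, Repr k (rh.right i) (H × H) := fun i => ℛ k _
    have hch : (Coalgebra.comul (R := k) h : H ⊗[k] H)
        = ∑ i ∈ rh.index, rh.left i ⊗ₜ[k] rh.right i := rh.eq.symm
    rw [hch, Finset.mul_sum]
    rw [map_sum]
    have hterm : ∀ i ∈ rh.index,
        fourierF k H ((f ⊗ₜ[k] g) * (rh.left i ⊗ₜ[k] rh.right i))
        = ∑ j ∈ rg.index, ∑ m ∈ (rrh i).index,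
            ((f * rh.left i) * (S ((rrh i).left m) * S (rg.left j)))
              ⊗ₜ[k] (rg.right j * (rrh i).right m) := by
      intro i _
      rw [Algebra.TensorProduct.tmul_mul_tmul,
        fourierF_tmul_mul (f * rh.left i) rg (rrh i)]
      refine Finset.sum_congr rfl fun j _ => Finset.sum_congr rfl fun m _ => ?_
      rw [antipode_mul]
    rw [Finset.sum_congr rfl hterm, Finset.sum_comm]
    have hinner : ∀ j ∈ rg.index, (∑ i ∈ rh.index, ∑ m ∈ (rrh i).index,
        ((f * rh.left i) * (S ((rrh i).left m) * S (rg.left j)))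
          ⊗ₜ[k] (rg.right j * (rrh i).right m))
        = ((f * S (rg.left j)) ⊗ₜ[k] (rg.right j * h)) := by
      intro j _
      have hkey := one_tmul_eq h rh rlh rrh
      have := congrArg (⇑(TensorProduct.map
        ((LinearMap.mulRight k (S (rg.left j))) ∘ₗ (LinearMap.mulLeft k f))
        (LinearMap.mulLeft k (rg.right j)))) hkey
      simpa [map_sum, mul_assoc] using this
    rw [Finset.sum_congr rfl hinner, fourierF_tmul f g rg, Finset.sum_mul]
    refine Finset.sum_congr rfl fun j _ => ?_
    rw [Algebra.TensorProduct.tmul_mul_tmul, mul_one]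
  · -- property (2)
    intro f g h
    set rg := ℛ k g
    rw [fourierF_tmul (h * f) g rg, fourierF_tmul f g rg, Finset.mul_sum]
    refine Finset.sum_congr rfl fun i _ => ?_
    rw [Algebra.TensorProduct.tmul_mul_tmul, one_mul, mul_assoc]
  · -- property (3)
    intro f g h
    set rg := ℛ k g
    set rh := ℛ k h
    rw [fourierF_tmul_mul f rh rg]
    have hch : (Coalgebra.comul (R := k) h : H ⊗[k] H)
        = ∑ i ∈ rh.index, rh.left i ⊗ₜ[k] rh.right i := rh.eq.symm
    rw [hch, map_sum]
    refine Finset.sum_congr rfl fun i _ => ?_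
    rw [sandwich_apply, fourierF_tmul f g rg, Finset.mul_sum, Finset.sum_mul]
    refine Finset.sum_congr rfl fun j _ => ?_
    rw [antipode_mul]
    rw [Algebra.TensorProduct.tmul_mul_tmul, Algebra.TensorProduct.tmul_mul_tmul]
    rw [one_mul, mul_one, mul_assoc]

end
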